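/- Let V be an n-dimensional real vector space and identify the contravariant spinor module for 𝕍 = V ⊕ V* with the exterior algebra ΛV*, where v ∈ V acts by contraction ι_v and α ∈ V* acts by exterior multiplication α∧·. For pure spinors φ, ψ ∈ ΛV* with Lagrangian null spaces N_φ, N_ψ ⊂ 𝕍, the Chevalley pairing (φ,ψ) = (φ^⊤ ∧ ψ)_{[n]} (top-degree component, where ⊤ reverses forms degree-by-degree with sign (−1)^{k(k−1)/2} on degree k) is nonzero if and only if N_φ and N_ψ are transverse (N_φ ∩ N_ψ = 0). -/

import Mathlib

set_option synthInstance.maxHeartbeats 1000000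
set_option maxHeartbeats 1000000
open Module

/-- The canonical split pairing on `𝕍 = V ⊕ V*`. -/
def vPair {V : Type*} [AddCommGroup V] [Module ℝ V]
    (p q : V × Module.Dual ℝ V) : ℝ :=
  p.2 q.1 + q.2 p.1

/-- The orthogonal complement of a set in `𝕍 = V ⊕ V*` for the canonical pairing. -/
def vPerp {V : Type*} [AddCommGroup V] [Module ℝ V]
    (S : Set (V × Module.Dual ℝ V)) : Set (V × Module.Dual ℝ V) :=
  {w | ∀ e ∈ S, vPair w e = 0}

/-- The contravariant spinor action of `𝕍 = V ⊕ V*` on `ΛV*`: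
`ρ(v ⊕ α)φ = α ∧ φ + ι_v φ` (contraction by `v` via `V ≅ V**`). -/
noncomputable def rho {V : Type*} [AddCommGroup V] [Module ℝ V]
    (w : V × Module.Dual ℝ V) (φ : ExteriorAlgebra ℝ (Module.Dual ℝ V)) :
    ExteriorAlgebra ℝ (Module.Dual ℝ V) :=
  ExteriorAlgebra.ι ℝ w.2 * φ +
    CliffordAlgebra.contractLeft (Module.Dual.eval ℝ V w.1) φ

/-- The null space `N_φ = {w ∈ 𝕍 : ρ(w)φ = 0}` of a spinor `φ ∈ ΛV*`. -/
def nullSet {V : Type*} [AddCommGroup V] [Module ℝ V]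
    (φ : ExteriorAlgebra ℝ (Module.Dual ℝ V)) : Set (V × Module.Dual ℝ V) :=
  {w | rho w φ = 0}

open CliffordAlgebra DirectSum

namespace Stmt16Aux


variable {R : Type*} [CommRing R] {M : Type*} [AddCommGroup M] [Module R M]
  {Q : QuadraticForm R M}

/-- L1 -/
theorem cl_mul_ι (d : Module.Dual R M) (m : M) (y : CliffordAlgebra Q) :
    contractLeft d (y * ι Q m) = contractLeft d y * ι Q m + d m • involute y := by
  induction y using CliffordAlgebra.left_induction with
  | algebraMap r =>
      simp only [Algebra.algebraMap_eq_smul_one, smul_mul_assoc, one_mul, map_smul,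
        contractLeft_ι, contractLeft_one, involute.commutes, smul_zero, zero_mul, zero_add,
        map_one]
      rw [smul_comm]
  | add x y hx hy =>
      simp only [add_mul, map_add, hx, hy, smul_add]
      abel
  | ι_mul x a hx =>
      rw [mul_assoc, contractLeft_ι_mul, contractLeft_ι_mul, hx, map_mul, involute_ι]
      simp only [smul_sub, sub_mul, mul_add, mul_smul_comm, neg_mul, mul_neg, smul_neg,
        smul_mul_assoc, mul_assoc]
      abel

/-- L2 -/
theorem involute_contractRight (d : Module.Dual R M) (y : CliffordAlgebra Q) :
    contractRight (involute y) d = - (contractLeft d y) := by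
  induction y using CliffordAlgebra.right_induction with
  | algebraMap r => simp [contractRight_eq]
  | add x y hx hy =>
      simp only [map_add, LinearMap.add_apply, hx, hy]; abel
  | mul_ι m x hx =>
      rw [map_mul, involute_ι, mul_neg, map_neg, LinearMap.neg_apply, contractRight_mul_ι,
        cl_mul_ι, hx]
      simp only [smul_sub, neg_sub, neg_mul, smul_neg, neg_neg, neg_add]
      abel

/-- L3 -/
theorem mul_contractRight (d : Module.Dual R M) (x y : CliffordAlgebra Q) :
    contractRight (x * y) d = x * contractRight y d + contractRight x d * involute y := by
  induction y using CliffordAlgebra.right_induction with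
  | algebraMap r =>
      simp only [contractRight_mul_algebraMap, contractRight_algebraMap, involute.commutes,
        mul_zero, zero_add, Algebra.smul_def, Algebra.commutes, mul_comm]
  | add x' y' hx hy =>
      simp only [mul_add, map_add, LinearMap.add_apply, hx, hy]
      abel
  | mul_ι m z hz =>
      rw [← mul_assoc, contractRight_mul_ι, contractRight_mul_ι, hz, map_mul, involute_ι]
      simp only [smul_sub, add_mul, mul_neg, sub_mul, mul_smul_comm, mul_sub,
        smul_add, smul_mul_assoc, mul_assoc]
      abel


section grading

variable {W : Type*} [AddCommGroup W] [Module ℝ W]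

local notation "E" => ExteriorAlgebra ℝ W
local notation "G" => (LinearMap.range (ExteriorAlgebra.ι ℝ : W →ₗ[ℝ] ExteriorAlgebra ℝ W))

theorem grade_eq (k : ℕ) : ⋀[ℝ]^k W = G ^ k := rfl

theorem mem_grade_mul {i j : ℕ} {x y : E} (hx : x ∈ ⋀[ℝ]^i W) (hy : y ∈ ⋀[ℝ]^j W) :
    x * y ∈ ⋀[ℝ]^(i+j) W := by
  rw [grade_eq, pow_add]
  exact Submodule.mul_mem_mul hx hy

theorem contract_mem_zero {x : E} (hx : x ∈ ⋀[ℝ]^0 W) (d : Module.Dual ℝ W) :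
    contractLeft d x = 0 := by
  rw [grade_eq, pow_zero] at hx
  obtain ⟨r, rfl⟩ := Submodule.mem_one.mp hx
  simp

theorem contract_mem_succ (k : ℕ) {x : E} (hx : x ∈ ⋀[ℝ]^(k+1) W) (d : Module.Dual ℝ W) :
    contractLeft d x ∈ ⋀[ℝ]^k W := by
  induction k generalizing x with
  | zero =>
      rw [grade_eq, pow_one] at hx
      obtain ⟨m, rfl⟩ := hx
      rw [contractLeft_ι, grade_eq, pow_zero]
      exact Submodule.mem_one.mpr ⟨d m, rfl⟩
  | succ k ih =>
      rw [grade_eq, pow_succ'] at hx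
      refine Submodule.mul_induction_on
        (C := fun z => contractLeft d z ∈ ⋀[ℝ]^(k+1) W) hx ?_ ?_
      · rintro _ ⟨v, rfl⟩ y hy
        rw [contractLeft_ι_mul]
        have hy' : y ∈ ⋀[ℝ]^(k+1) W := hy
        refine Submodule.sub_mem _ (Submodule.smul_mem _ _ hy') ?_
        have h1 : (ExteriorAlgebra.ι ℝ v : E) ∈ ⋀[ℝ]^1 W := by
          rw [grade_eq, pow_one]; exact ⟨v, rfl⟩
        have := mem_grade_mul h1 (ih hy')
        rw [add_comm] at this
        exact this
      · intro a b ha hb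
        rw [map_add]; exact Submodule.add_mem _ ha hb

theorem reverse_mem_grade (k : ℕ) {x : E} (hx : x ∈ ⋀[ℝ]^k W) :
    reverse (Q := 0) x ∈ ⋀[ℝ]^k W := by
  induction k generalizing x with
  | zero =>
      rw [grade_eq, pow_zero] at hx ⊢
      obtain ⟨r, rfl⟩ := Submodule.mem_one.mp hx
      rw [reverse.commutes]; exact Submodule.mem_one.mpr ⟨r, rfl⟩
  | succ k ih =>
      rw [grade_eq, pow_succ'] at hx
      refine Submodule.mul_induction_on
        (C := fun z => reverse (Q := 0) z ∈ ⋀[ℝ]^(k+1) W) hx ?_ ?_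
      · rintro _ ⟨v, rfl⟩ y hy
        rw [reverse.map_mul, reverse_ι]
        have hy' : y ∈ ⋀[ℝ]^k W := hy
        have h1 : (ExteriorAlgebra.ι ℝ v : E) ∈ ⋀[ℝ]^1 W := by
          rw [grade_eq, pow_one]; exact ⟨v, rfl⟩
        exact mem_grade_mul (ih hy') h1
      · intro a b ha hb
        rw [map_add]; exact Submodule.add_mem _ ha hb

variable [FiniteDimensional ℝ W]

theorem grade_eq_bot {k : ℕ} (hk : finrank ℝ W < k) : ⋀[ℝ]^k W = (⊥ : Submodule ℝ E) := by
  rw [← ExteriorAlgebra.ιMulti_span_fixedDegree, Submodule.span_eq_bot]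
  rintro _ ⟨v, rfl⟩
  apply AlternatingMap.map_linearDependent
  intro hli
  exact absurd (hli.fintype_card_le_finrank) (by simpa using Nat.not_le.mpr hk)

end grading

section proj

variable {W : Type*} [AddCommGroup W] [Module ℝ W]

local notation "E" => ExteriorAlgebra ℝ W
local notation "pr" => GradedAlgebra.proj (fun i : ℕ => ⋀[ℝ]^i W)

theorem pr_mem (k : ℕ) (x : E) : pr k x ∈ ⋀[ℝ]^k W := by
  rw [GradedAlgebra.proj_apply]
  exact Submodule.coe_mem _

theorem pr_of_mem_same {k : ℕ} {x : E} (hx : x ∈ ⋀[ℝ]^k W) : pr k x = x :=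
  DirectSum.decompose_of_mem_same (ℳ := fun i : ℕ => ⋀[ℝ]^i W) hx

theorem pr_of_mem_ne {i k : ℕ} {x : E} (hx : x ∈ ⋀[ℝ]^i W) (h : i ≠ k) : pr k x = 0 := by
  rw [GradedAlgebra.proj_apply,
    DirectSum.decompose_of_mem_ne (ℳ := fun i : ℕ => ⋀[ℝ]^i W) hx h]

/-- commuting `pr` with maps preserving each grade -/
theorem pr_commute (f : E →ₗ[ℝ] E) (hf : ∀ i (x : E), x ∈ ⋀[ℝ]^i W → f x ∈ ⋀[ℝ]^i W)
    (k : ℕ) (x : E) : pr k (f x) = f (pr k x) := by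
  induction x using DirectSum.Decomposition.inductionOn (ℳ := fun i : ℕ => ⋀[ℝ]^i W) with
  | zero => simp
  | homogeneous m =>
      rename_i i
      by_cases h : i = k
      · subst h
        rw [pr_of_mem_same (hf _ _ m.2), pr_of_mem_same m.2]
      · rw [pr_of_mem_ne (hf _ _ m.2) h, pr_of_mem_ne m.2 h, map_zero]
  | add x y hx hy =>
      rw [map_add, map_add, hx, hy, ← map_add f, ← map_add (GradedAlgebra.proj _ k)]

theorem pr_reverse (k : ℕ) (x : E) :
    pr k (reverse (Q := 0) x) = reverse (Q := 0) (pr k x) :=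
  pr_commute (reverse (Q := 0)) (fun i y hy => reverse_mem_grade i hy) k x

theorem pr_contract (k : ℕ) (d : Module.Dual ℝ W) (x : E) :
    pr k (contractLeft d x) = contractLeft d (pr (k+1) x) := by
  induction x using DirectSum.Decomposition.inductionOn (ℳ := fun i : ℕ => ⋀[ℝ]^i W) with
  | zero => simp
  | homogeneous m =>
      rename_i i
      by_cases h : i = k + 1
      · subst h
        rw [pr_of_mem_same (x := (m : E)) m.2,
          pr_of_mem_same (contract_mem_succ k m.2 d)]
      · rw [pr_of_mem_ne (x := (m : E)) m.2 h, map_zero]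
        rcases i with _ | j
        · rw [contract_mem_zero m.2 d, map_zero]
        · exact pr_of_mem_ne (contract_mem_succ j m.2 d) (by omega)
  | add x y hx hy =>
      rw [map_add, map_add, hx, hy, ← map_add (CliffordAlgebra.contractLeft d),
        ← map_add (GradedAlgebra.proj _ (k+1))]

variable [FiniteDimensional ℝ W]

local notation "n" => finrank ℝ W

theorem pr_top_eq_zero {k : ℕ} (hk : n < k) (x : E) : pr k x = 0 := by
  have := pr_mem k x
  rw [grade_eq_bot hk] at this
  simpa using this

theorem pr_total (x : E) : ∑ i ∈ Finset.range (n+1), pr i x = x := by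
  classical
  have h := DirectSum.sum_support_decompose (fun i : ℕ => ⋀[ℝ]^i W) x
  conv_rhs => rw [← h]
  rw [← Finset.sum_subset (Finset.subset_iff.mpr ?_) (fun i _ hi => ?_)]
  · rfl
  · intro i hi
    rw [DFinsupp.mem_support_iff] at hi
    rw [Finset.mem_range]
    by_contra hc
    exact hi (by
      have : (decompose (fun i : ℕ => ⋀[ℝ]^i W) x i : E) = 0 := pr_top_eq_zero (by omega) x
      exact Subtype.ext this)
  · rw [DFinsupp.notMem_support_iff] at hi
    simpa [GradedAlgebra.proj_apply] using congrArg Subtype.val hi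

theorem pr_n_contractLeft (d : Module.Dual ℝ W) (x : E) :
    pr n (contractLeft d x) = 0 := by
  rw [pr_contract, pr_top_eq_zero (by omega), map_zero]

theorem pr_n_contractRight (d : Module.Dual ℝ W) (x : E) :
    pr n (contractRight (Q := 0) x d) = 0 := by
  rw [contractRight_eq, pr_reverse, pr_n_contractLeft, map_zero]

/-- the key transfer identity at top degree -/
theorem pr_n_contract_transfer (d : Module.Dual ℝ W) (x b : E) :
    pr n (contractRight (Q := 0) x d * b) = pr n (x * contractLeft d b) := by
  have h := mul_contractRight (Q := (0 : QuadraticForm ℝ W)) d x (involute b)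
  rw [involute_involute, involute_contractRight] at h
  have h2 := congrArg (pr n) h
  rw [pr_n_contractRight, map_add] at h2
  rw [mul_neg, map_neg] at h2
  -- h2 : 0 = -(pr n (x * contractLeft d b)) + pr n (contractRight x d * b)
  have h3 := h2.symm
  rw [neg_add_eq_zero] at h3
  exact h3.symm

end proj

section rho
variable {V : Type*} [AddCommGroup V] [Module ℝ V]

local notation "W" => Module.Dual ℝ V
local notation "E" => ExteriorAlgebra ℝ (Module.Dual ℝ V)
local notation "VV" => V × Module.Dual ℝ V
local notation "pr" => GradedAlgebra.proj (fun i : ℕ => ⋀[ℝ]^i (Module.Dual ℝ V))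

theorem rho_zero_spinor (w : VV) : rho w (0 : E) = 0 := by
  simp [rho]

theorem rho_add_spinor (w : VV) (x y : E) : rho w (x + y) = rho w x + rho w y := by
  simp only [rho, mul_add, map_add]
  abel

theorem rho_smul_spinor (w : VV) (c : ℝ) (x : E) : rho w (c • x) = c • rho w x := by
  simp only [rho, map_smul, smul_add, mul_smul_comm]

theorem rho_add_left (u w : VV) (x : E) : rho (u + w) x = rho u x + rho w x := by
  simp only [rho, Prod.fst_add, Prod.snd_add, map_add, add_mul, LinearMap.add_apply]
  abel

theorem rho_smul_left (c : ℝ) (u : VV) (x : E) : rho (c • u) x = c • rho u x := by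
  simp only [rho, Prod.smul_fst, Prod.smul_snd, map_smul, smul_mul_assoc, smul_add,
    LinearMap.smul_apply]

theorem rho_zero_left (x : E) : rho (0 : VV) x = 0 := by
  simp [rho]

/-- the linear map `w ↦ ρ(w)φ` -/
noncomputable def rhoMap (φ : E) : VV →ₗ[ℝ] E where
  toFun w := rho w φ
  map_add' u w := rho_add_left u w φ
  map_smul' c u := rho_smul_left c u φ

@[simp] theorem rhoMap_apply (φ : E) (w : VV) : rhoMap φ w = rho w φ := rfl

/-- Clifford anticommutation relation for `rho`. -/
theorem rho_rho_add (u w : VV) (x : E) :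
    rho u (rho w x) + rho w (rho u x) = vPair u w • x := by
  simp only [rho, mul_add, map_add]
  rw [contractLeft_ι_mul, contractLeft_ι_mul]
  rw [show CliffordAlgebra.contractLeft (Module.Dual.eval ℝ V u.1)
        (CliffordAlgebra.contractLeft (Module.Dual.eval ℝ V w.1) x)
      = - CliffordAlgebra.contractLeft (Module.Dual.eval ℝ V w.1)
        (CliffordAlgebra.contractLeft (Module.Dual.eval ℝ V u.1) x) from
    CliffordAlgebra.contractLeft_comm (Module.Dual.eval ℝ V u.1) (Module.Dual.eval ℝ V w.1) x]
  rw [show ExteriorAlgebra.ι ℝ u.2 * (ExteriorAlgebra.ι ℝ w.2 * x)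
      = - (ExteriorAlgebra.ι ℝ w.2 * (ExteriorAlgebra.ι ℝ u.2 * x)) by
    rw [← mul_assoc, ← mul_assoc, ← neg_mul]
    congr 1
    exact eq_neg_of_add_eq_zero_left (ExteriorAlgebra.ι_add_mul_swap u.2 w.2)]
  rw [show (Module.Dual.eval ℝ V u.1) w.2 = w.2 u.1 from rfl,
    show (Module.Dual.eval ℝ V w.1) u.2 = u.2 w.1 from rfl, vPair, add_smul]
  module

theorem rho_rho_eq (u w : VV) (x : E) (h : rho w x = 0) :
    rho u (rho w x) + rho w (rho u x) = vPair u w • x := rho_rho_add u w x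

/-- reverse of a rho action -/
theorem reverse_rho (w : VV) (a : E) :
    reverse (Q := 0) (rho w a) =
      reverse (Q := 0) a * ExteriorAlgebra.ι ℝ w.2 +
        contractRight (Q := 0) (reverse (Q := 0) a) (Module.Dual.eval ℝ V w.1) := by
  rw [rho, map_add, reverse.map_mul, reverse_ι, contractRight_eq, reverse_reverse]

variable [FiniteDimensional ℝ V]

local notation "nn" => finrank ℝ (Module.Dual ℝ V)

/-- The adjoint identity for the Chevalley pairing. -/
theorem adj (w : VV) (a b : E) :
    pr nn (reverse (Q := 0) (rho w a) * b) = pr nn (reverse (Q := 0) a * rho w b) := by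
  rw [reverse_rho, add_mul, map_add, pr_n_contract_transfer, rho, mul_add, map_add, mul_assoc]

theorem adj_zero (w : VV) (a b : E) (h : rho w b = 0) :
    pr nn (reverse (Q := 0) (rho w a) * b) = 0 := by
  rw [adj, h, mul_zero, map_zero]

theorem adj_zero' (w : VV) (a b : E) (h : rho w a = 0) :
    pr nn (reverse (Q := 0) a * rho w b) = 0 := by
  rw [← adj, h, map_zero, zero_mul, map_zero]

end rho

section euler
variable {W : Type*} [AddCommGroup W] [Module ℝ W] [FiniteDimensional ℝ W]

local notation "E" => ExteriorAlgebra ℝ W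
local notation "pr" => GradedAlgebra.proj (fun i : ℕ => ⋀[ℝ]^i W)

theorem euler (b : Basis (Fin (finrank ℝ W)) ℝ W) {k : ℕ} {x : E} (hx : x ∈ ⋀[ℝ]^k W) :
    ∑ i, ExteriorAlgebra.ι ℝ (b i) * contractLeft (b.coord i) x = (k : ℝ) • x := by
  induction k generalizing x with
  | zero =>
      have h0 : ∀ i, contractLeft (b.coord i) x = 0 := fun i => contract_mem_zero hx _
      simp [h0]
  | succ k ih =>
      rw [grade_eq, pow_succ'] at hx
      refine Submodule.mul_induction_on
        (C := fun z => ∑ i, ExteriorAlgebra.ι ℝ (b i) * contractLeft (b.coord i) z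
          = ((k+1 : ℕ) : ℝ) • z) hx ?_ ?_
      · rintro _ ⟨v, rfl⟩ y hy
        have hy' : y ∈ ⋀[ℝ]^k W := hy
        have step : ∀ i : Fin (finrank ℝ W),
            ExteriorAlgebra.ι ℝ (b i) * contractLeft (b.coord i)
              (ExteriorAlgebra.ι ℝ v * y)
            = b.coord i v • (ExteriorAlgebra.ι ℝ (b i) * y)
              + ExteriorAlgebra.ι ℝ v *
                  (ExteriorAlgebra.ι ℝ (b i) * contractLeft (b.coord i) y) := by
          intro i
          rw [contractLeft_ι_mul, mul_sub, mul_smul_comm]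
          rw [show ExteriorAlgebra.ι ℝ (b i) * (ExteriorAlgebra.ι ℝ v
              * contractLeft (b.coord i) y)
            = - (ExteriorAlgebra.ι ℝ v * (ExteriorAlgebra.ι ℝ (b i)
              * contractLeft (b.coord i) y)) by
            rw [← mul_assoc, ← mul_assoc, ← neg_mul]
            congr 1
            exact eq_neg_of_add_eq_zero_left (ExteriorAlgebra.ι_add_mul_swap (b i) v)]
          abel
        rw [Finset.sum_congr rfl (fun i _ => step i), Finset.sum_add_distrib,
          ← Finset.mul_sum, ih hy']
        have hv : ∑ i, b.coord i v • (ExteriorAlgebra.ι ℝ (b i) * y)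
            = ExteriorAlgebra.ι ℝ v * y := by
          simp_rw [← smul_mul_assoc, ← Finset.sum_mul, ← map_smul, ← map_sum,
            Basis.coord_apply, Basis.sum_repr]
        rw [hv, mul_smul_comm]
        push_cast
        module
      · intro z w hz hw
        simp only [mul_add, map_add, Finset.sum_add_distrib, hz, hw, smul_add]

theorem contract_detect {k : ℕ} (hk : k ≠ 0) {y : E} (hy : y ∈ ⋀[ℝ]^k W) (h0 : y ≠ 0) :
    ∃ d : Module.Dual ℝ W, contractLeft d y ≠ 0 := by
  by_contra hcon
  push_neg at hcon
  have he := euler (Module.finBasis ℝ W) hy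
  simp only [hcon, mul_zero, Finset.sum_const_zero] at he
  have : (k : ℝ) ≠ 0 := Nat.cast_ne_zero.mpr hk
  have hz : (k : ℝ) • y = 0 := he.symm
  rcases smul_eq_zero.mp hz with h | h
  · exact absurd h this
  · exact h0 h

theorem pr_ne_zero_ne_zero {k : ℕ} {x : E} (h : pr k x ≠ 0) : x ≠ 0 := by
  intro hx
  exact h (by rw [hx, map_zero])

theorem extract_aux (K : ℕ) (x : E) (h0 : x ≠ 0) (hK : ∀ i, K < i → pr i x = 0) :
    ∃ l : List (Module.Dual ℝ W),
      pr 0 (l.foldr (fun d z => contractLeft d z) x) ≠ 0 := by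
  induction K generalizing x with
  | zero =>
      refine ⟨[], ?_⟩
      have hx0 : x = pr 0 x := by
        conv_lhs => rw [← pr_total x]
        rw [Finset.sum_eq_single 0]
        · intro i _ hi
          exact hK i (Nat.pos_of_ne_zero hi)
        · intro h; simp at h
      simpa [← hx0] using h0
  | succ K ih =>
      by_cases hp : pr (K+1) x = 0
      · refine ih x h0 (fun i hi => ?_)
        rcases Nat.lt_or_ge (K+1) i with h' | h'
        · exact hK i h'
        · have : i = K + 1 := by omega
          rw [this]; exact hp
      · obtain ⟨d, hd⟩ := contract_detect (Nat.succ_ne_zero K) (pr_mem (K+1) x) hp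
        set x' := contractLeft d x with hx'
        have hprK : pr K x' = contractLeft d (pr (K+1) x) := pr_contract K d x
        have hx'0 : x' ≠ 0 := pr_ne_zero_ne_zero (k := K) (by rw [hprK]; exact hd)
        have hK' : ∀ i, K < i → pr i x' = 0 := by
          intro i hi
          rw [hx', pr_contract, hK (i+1) (by omega), map_zero]
        obtain ⟨l, hl⟩ := ih x' hx'0 hK'
        refine ⟨l ++ [d], ?_⟩
        rwa [List.foldr_append]

theorem extract (x : E) (h0 : x ≠ 0) :
    ∃ l : List (Module.Dual ℝ W),
      pr 0 (l.foldr (fun d z => contractLeft d z) x) ≠ 0 :=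
  extract_aux (finrank ℝ W) x h0 (fun i hi => pr_top_eq_zero hi x)

theorem theta_ne_zero (b : Basis (Fin (finrank ℝ W)) ℝ W) :
    ExteriorAlgebra.ιMulti ℝ (finrank ℝ W) (M := W) b ≠ 0 := by
  intro h
  have := congrArg (ExteriorAlgebra.liftAlternating
    (Function.update (fun i => (0 : W [⋀^Fin i]→ₗ[ℝ] ℝ)) (finrank ℝ W) b.det)) h
  rw [ExteriorAlgebra.liftAlternating_apply_ιMulti, Function.update_self, map_zero,
    Basis.det_self] at this
  exact one_ne_zero this

theorem top_mul_right (Θ : E) (hΘ : Θ ∈ ⋀[ℝ]^(finrank ℝ W) W) (b : E) (c' : ℝ)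
    (h : pr 0 b = algebraMap ℝ E c') : Θ * b = c' • Θ := by
  conv_lhs => rw [← pr_total b, Finset.mul_sum]
  rw [Finset.sum_eq_single 0]
  · rw [h, ← Algebra.commutes, ← Algebra.smul_def]
  · intro i _ hi
    have : Θ * pr i b ∈ ⋀[ℝ]^(finrank ℝ W + i) W := mem_grade_mul hΘ (pr_mem i b)
    rw [grade_eq_bot (by omega)] at this
    simpa using this
  · intro h'; simp at h'

theorem top_rev_mul (Θ : E) (hΘ : Θ ∈ ⋀[ℝ]^(finrank ℝ W) W) (a : E) (c : ℝ)
    (h : pr 0 a = algebraMap ℝ E c) :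
    pr (finrank ℝ W) (reverse (Q := 0) a * Θ) = c • Θ := by
  conv_lhs => rw [← pr_total a, map_sum, Finset.sum_mul, map_sum]
  rw [Finset.sum_eq_single 0]
  · rw [h, reverse.commutes, ← Algebra.smul_def]
    exact pr_of_mem_same (Submodule.smul_mem _ _ hΘ)
  · intro i _ hi
    refine pr_of_mem_ne (mem_grade_mul (reverse_mem_grade i (pr_mem i a)) hΘ) (by omega)
  · intro h'; simp at h'

theorem pr_zero_scalar (x : E) : ∃ c : ℝ, pr 0 x = algebraMap ℝ E c := by
  have := pr_mem 0 x
  rw [grade_eq, pow_zero] at this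
  obtain ⟨c, hc⟩ := Submodule.mem_one.mp this
  exact ⟨c, hc.symm⟩

end euler

section bform
variable {V : Type*} [AddCommGroup V] [Module ℝ V]

local notation "VV" => V × Module.Dual ℝ V
local notation "E" => ExteriorAlgebra ℝ (Module.Dual ℝ V)

theorem vPair_comm (p q : VV) : vPair p q = vPair q p := add_comm _ _

/-- `vPair` as a bilinear form. -/
noncomputable def Bform : LinearMap.BilinForm ℝ VV :=
  LinearMap.mk₂ ℝ vPair
    (by intro p p' q; simp [vPair]; ring)
    (by intro c p q; simp [vPair]; ring)
    (by intro p q q'; simp [vPair]; ring)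
    (by intro c p q; simp [vPair]; ring)

@[simp] theorem Bform_apply (p q : VV) : Bform p q = vPair p q := rfl

theorem Bform_isRefl : (Bform (V := V)).IsRefl := by
  intro p q h
  rwa [Bform_apply, vPair_comm] at h

variable [FiniteDimensional ℝ V]

theorem Bform_nondeg : (Bform (V := V)).Nondegenerate := by
  refine (LinearMap.IsRefl.nondegenerate_iff_separatingLeft (Bform_isRefl (V := V))).mpr ?_
  intro p h
  have hα : p.2 = 0 := by
    ext u
    have := h (u, 0)
    simpa [vPair] using this
  have hv : p.1 = 0 := by
    rw [← Module.forall_dual_apply_eq_zero_iff ℝ p.1]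
    intro f
    have := h (0, f)
    simpa [vPair] using this
  exact Prod.ext hv hα

/-- The null space as a submodule. -/
noncomputable def nullSub (φ : E) : Submodule ℝ VV := LinearMap.ker (rhoMap φ)

theorem mem_nullSub {φ : E} {w : VV} : w ∈ nullSub φ ↔ rho w φ = 0 := by
  rw [nullSub, LinearMap.mem_ker, rhoMap_apply]

theorem nullSub_coe (φ : E) : (nullSub φ : Set VV) = nullSet φ := by
  ext w
  rw [SetLike.mem_coe, mem_nullSub]
  rfl

theorem orthogonal_coe (φ : E) :
    ((Bform.orthogonal (nullSub φ) : Submodule ℝ VV) : Set VV) = vPerp (nullSet φ) := by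
  ext w
  rw [SetLike.mem_coe, LinearMap.BilinForm.mem_orthogonal_iff]
  constructor
  · intro h e he
    have := h e (mem_nullSub.mpr he)
    rwa [Bform_apply, vPair_comm] at this
  · intro h e he
    rw [Bform_apply, vPair_comm]
    exact h e (mem_nullSub.mp he)

theorem nullSub_eq_orthogonal {φ : E} (hφ : nullSet φ = vPerp (nullSet φ)) :
    nullSub φ = Bform.orthogonal (nullSub φ) := by
  apply SetLike.coe_injective
  rw [nullSub_coe, orthogonal_coe]
  exact hφ

theorem finrank_VV : finrank ℝ VV = 2 * finrank ℝ V := by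
  rw [Module.finrank_prod, Subspace.dual_finrank_eq]
  ring

theorem nullSub_finrank {φ : E} (hφ : nullSet φ = vPerp (nullSet φ)) :
    finrank ℝ (nullSub φ) = finrank ℝ V := by
  have h1 := LinearMap.BilinForm.finrank_orthogonal (Bform_nondeg (V := V))
    (nullSub φ)
  rw [← nullSub_eq_orthogonal hφ, finrank_VV] at h1
  have h2 : finrank ℝ (nullSub φ) ≤ finrank ℝ VV := Submodule.finrank_le _
  rw [finrank_VV] at h2
  omega

theorem sup_eq_top {φ ψ : E} (hφ : nullSet φ = vPerp (nullSet φ))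
    (hψ : nullSet ψ = vPerp (nullSet ψ))
    (hint : nullSet φ ∩ nullSet ψ = {0}) :
    nullSub φ ⊔ nullSub ψ = ⊤ := by
  have hinf : nullSub φ ⊓ nullSub ψ = ⊥ := by
    rw [Submodule.eq_bot_iff]
    intro w hw
    have : w ∈ nullSet φ ∩ nullSet ψ := by
      constructor
      · rw [← nullSub_coe φ]; exact hw.1
      · rw [← nullSub_coe ψ]; exact hw.2
    rw [hint] at this
    exact this
  apply Submodule.eq_top_of_finrank_eq
  have h3 := Submodule.finrank_sup_add_finrank_inf_eq (nullSub φ) (nullSub ψ)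
  rw [hinf, nullSub_finrank hφ, nullSub_finrank hψ, finrank_bot] at h3
  have h4 : finrank ℝ VV = 2 * finrank ℝ V := finrank_VV
  omega

theorem exists_vPair_one {w : VV} (hw : w ≠ 0) : ∃ w' : VV, vPair w w' = 1 := by
  by_cases hv : w.1 = 0
  · have hα : w.2 ≠ 0 := by
      intro h
      exact hw (Prod.ext hv h)
    obtain ⟨u, hu⟩ : ∃ u, w.2 u ≠ 0 := by
      by_contra h
      push_neg at h
      exact hα (LinearMap.ext fun u => h u)
    refine ⟨((w.2 u)⁻¹ • u, 0), ?_⟩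
    simp [vPair, map_smul, inv_mul_cancel₀ hu]
  · obtain ⟨f, hf⟩ : ∃ f : Module.Dual ℝ V, f w.1 ≠ 0 := by
      by_contra h
      push_neg at h
      exact hv ((Module.forall_dual_apply_eq_zero_iff ℝ w.1).mp h)
    refine ⟨(0, (f w.1)⁻¹ • f), ?_⟩
    simp [vPair, inv_mul_cancel₀ hf]

end bform

section lists
variable {V : Type*} [AddCommGroup V] [Module ℝ V]

local notation "VV" => V × Module.Dual ℝ V
local notation "E" => ExteriorAlgebra ℝ (Module.Dual ℝ V)
local notation "pr" => GradedAlgebra.proj (fun i : ℕ => ⋀[ℝ]^i (Module.Dual ℝ V))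
local notation "nV" => finrank ℝ (Module.Dual ℝ V)

/-- Iterated application of `rho` along a list. -/
noncomputable def app (l : List VV) (z : E) : E := l.foldr (fun w s => rho w s) z

@[simp] theorem app_nil (z : E) : app ([] : List VV) z = z := rfl

@[simp] theorem app_cons (w : VV) (l : List VV) (z : E) :
    app (w :: l) z = rho w (app l z) := rfl

theorem app_append (l l' : List VV) (z : E) : app (l ++ l') z = app l (app l' z) :=
  List.foldr_append

@[simp] theorem app_zero (l : List VV) : app l (0 : E) = 0 := by
  induction l with
  | nil => rfl
  | cons w l ih => rw [app_cons, ih, rho_zero_spinor]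

theorem app_add (l : List VV) (z z' : E) : app l (z + z') = app l z + app l z' := by
  induction l with
  | nil => rfl
  | cons w l ih => rw [app_cons, ih, rho_add_spinor, app_cons, app_cons]

theorem app_smul (l : List VV) (c : ℝ) (z : E) : app l (c • z) = c • app l z := by
  induction l with
  | nil => rfl
  | cons w l ih => rw [app_cons, ih, rho_smul_spinor, app_cons]

theorem app_sub (l : List VV) (z z' : E) : app l (z - z') = app l z - app l z' := by
  have h := app_add l (z - z') z'
  rw [sub_add_cancel] at h
  rw [eq_sub_of_add_eq h.symm]

variable [FiniteDimensional ℝ V]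

theorem adj_list (u : List VV) (a s : E) :
    pr nV (reverse (Q := 0) (app u a) * s) =
      pr nV (reverse (Q := 0) a * app u.reverse s) := by
  induction u generalizing s with
  | nil => simp
  | cons w u' ih =>
      rw [app_cons, adj, ih (rho w s), List.reverse_cons, app_append]
      rfl

theorem appM_zero {ψ : E} (x : List VV) (hx : ∀ m ∈ x, m ∈ nullSub ψ) (hne : x ≠ []) :
    app x ψ = 0 := by
  induction x with
  | nil => exact absurd rfl hne
  | cons m x' ih =>
      rcases x' with _ | ⟨m', x''⟩
      · rw [app_cons, app_nil]
        exact mem_nullSub.mp (hx m (List.mem_cons_self))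
      · rw [app_cons, ih (fun m hm => hx m (List.mem_cons_of_mem _ hm)) (by simp),
          rho_zero_spinor]

theorem base_vanish {φ ψ : E} (hpair : pr nV (reverse (Q := 0) φ * ψ) = 0)
    (x : List VV) (hx : ∀ m ∈ x, m ∈ nullSub ψ) :
    pr nV (reverse (Q := 0) φ * app x ψ) = 0 := by
  rcases x with _ | ⟨m, x'⟩
  · simpa using hpair
  · rw [appM_zero _ hx (by simp), mul_zero, map_zero]

theorem inner_vanish {φ ψ : E} (j : ℕ)
    (IH : ∀ x : List VV, (∀ m ∈ x, m ∈ nullSub ψ) → ∀ l : List VV, l.length ≤ j →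
      pr nV (reverse (Q := 0) φ * app (x ++ l) ψ) = 0)
    (x : List VV) (hx : ∀ m ∈ x, m ∈ nullSub ψ) :
    ∀ (y : List VV), (∀ m ∈ y, m ∈ nullSub ψ) → ∀ nn ∈ nullSub φ,
      ∀ l' : List VV, l'.length ≤ j →
      pr nV (reverse (Q := 0) φ * app x (rho nn (app y (app l' ψ)))) = 0 := by
  induction x using List.reverseRecOn with
  | nil =>
      intro y hy nn hnn l' hl'
      rw [app_nil]
      exact adj_zero' nn φ _ (mem_nullSub.mp hnn)
  | append_singleton x' m' ihx =>
      intro y hy nn hnn l' hl'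
      have hx' : ∀ m ∈ x', m ∈ nullSub ψ := fun m hm => hx m (by simp [hm])
      have hm' : m' ∈ nullSub ψ := hx m' (by simp)
      rw [app_append]
      have hz : app [m'] (rho nn (app y (app l' ψ)))
          = vPair m' nn • app y (app l' ψ) - rho nn (rho m' (app y (app l' ψ))) := by
        rw [show app [m'] (rho nn (app y (app l' ψ)))
            = rho m' (rho nn (app y (app l' ψ))) from rfl]
        exact eq_sub_of_add_eq (rho_rho_add m' nn _)
      rw [hz, app_sub, app_smul, mul_sub, map_sub, mul_smul_comm, map_smul]
      have h1 : pr nV (reverse (Q := 0) φ * app x' (app y (app l' ψ))) = 0 := by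
        rw [← app_append, ← app_append]
        exact IH (x' ++ y) (by
          intro m hm
          rcases List.mem_append.mp hm with h | h
          · exact hx' m h
          · exact hy m h) l' hl'
      have h2 : pr nV (reverse (Q := 0) φ *
          app x' (rho nn (rho m' (app y (app l' ψ))))) = 0 := by
        have : rho m' (app y (app l' ψ)) = app (m' :: y) (app l' ψ) := rfl
        rw [this]
        exact ihx hx' (m' :: y) (by
          intro m hm
          rcases List.mem_cons.mp hm with h | h
          · exact h ▸ hm'
          · exact hy m h) nn hnn l' hl'
      rw [h1, h2, smul_zero, sub_zero]

theorem vanish_aux {φ ψ : E} (hpair : pr nV (reverse (Q := 0) φ * ψ) = 0)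
    (hsup : nullSub φ ⊔ nullSub ψ = ⊤) (j : ℕ) :
    ∀ x : List VV, (∀ m ∈ x, m ∈ nullSub ψ) → ∀ l : List VV, l.length ≤ j →
      pr nV (reverse (Q := 0) φ * app (x ++ l) ψ) = 0 := by
  induction j with
  | zero =>
      intro x hx l hl
      rw [List.length_eq_zero_iff.mp (Nat.le_zero.mp hl), List.append_nil]
      exact base_vanish hpair x hx
  | succ j ihj =>
      intro x hx l hl
      rcases l with _ | ⟨u, l'⟩
      · rw [List.append_nil]
        exact base_vanish hpair x hx
      · have hl' : l'.length ≤ j := by simpa using hl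
        have hu : u ∈ nullSub φ ⊔ nullSub ψ := by rw [hsup]; trivial
        obtain ⟨nn, hnn, mm, hmm, hu'⟩ := Submodule.mem_sup.mp hu
        rw [app_append, app_cons, ← hu', rho_add_left, app_add, mul_add, map_add]
        have hN : pr nV (reverse (Q := 0) φ * app x (rho nn (app l' ψ))) = 0 := by
          have := inner_vanish j ihj x hx [] (by simp) nn hnn l' hl'
          simpa using this
        have hM : pr nV (reverse (Q := 0) φ * app x (rho mm (app l' ψ))) = 0 := by
          have heq : app x (rho mm (app l' ψ)) = app ((x ++ [mm]) ++ l') ψ := by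
            rw [app_append, app_append]
            rfl
          rw [heq]
          exact ihj (x ++ [mm]) (by
            intro m hm
            rcases List.mem_append.mp hm with h | h
            · exact hx m h
            · rw [List.mem_singleton.mp h]; exact hmm) l' hl'
        rw [hN, hM, add_zero]

theorem all_vanish {φ ψ : E} (hpair : pr nV (reverse (Q := 0) φ * ψ) = 0)
    (hsup : nullSub φ ⊔ nullSub ψ = ⊤) (l : List VV) :
    pr nV (reverse (Q := 0) φ * app l ψ) = 0 := by
  have := vanish_aux hpair hsup l.length [] (by simp) l le_rfl
  simpa using this

theorem app_contrList (l : List (Module.Dual ℝ (Module.Dual ℝ V))) (z : E) :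
    app (l.map fun d => (((Module.evalEquiv ℝ V).symm d : V), (0 : Module.Dual ℝ V))) z
      = l.foldr (fun d x => contractLeft d x) z := by
  induction l with
  | nil => rfl
  | cons d l ih =>
      rw [List.map_cons, app_cons, ih, rho]
      simp only [map_zero, zero_mul, zero_add]
      congr 1
      rw [show Module.Dual.eval ℝ V ((Module.evalEquiv ℝ V).symm d)
          = Module.evalEquiv ℝ V ((Module.evalEquiv ℝ V).symm d) from rfl,
        LinearEquiv.apply_symm_apply]

theorem app_wedgeList (c : List (Module.Dual ℝ V)) (z : E) :
    app (c.map fun α => ((0 : V), α)) z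
      = (c.map (ExteriorAlgebra.ι ℝ)).prod * z := by
  induction c with
  | nil => simp [app_nil]
  | cons α c ih =>
      rw [List.map_cons, app_cons, ih, rho]
      simp only [map_zero, LinearMap.zero_apply, add_zero, List.map_cons, List.prod_cons,
        mul_assoc]

end lists

section final
variable {V : Type*} [AddCommGroup V] [Module ℝ V] [FiniteDimensional ℝ V]

local notation "VV" => V × Module.Dual ℝ V
local notation "E" => ExteriorAlgebra ℝ (Module.Dual ℝ V)
local notation "pr" => GradedAlgebra.proj (fun i : ℕ => ⋀[ℝ]^i (Module.Dual ℝ V))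
local notation "nV" => finrank ℝ (Module.Dual ℝ V)

theorem pairing_zero_of_common {φ ψ : E} (w : VV) (hw : w ≠ 0)
    (h1 : w ∈ nullSet φ) (h2 : w ∈ nullSet ψ) :
    pr nV (reverse (Q := 0) φ * ψ) = 0 := by
  obtain ⟨w', hw'⟩ := exists_vPair_one hw
  have h1' : rho w φ = 0 := h1
  have h2' : rho w ψ = 0 := h2
  have hφeq : rho w (rho w' φ) = φ := by
    have h := rho_rho_add w w' φ
    rw [hw', one_smul, h1', rho_zero_spinor, add_zero] at h
    exact h
  rw [← hφeq]
  exact adj_zero w _ ψ h2'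

theorem transverse_of_pairing {φ ψ : E}
    (hne : pr nV (reverse (Q := 0) φ * ψ) ≠ 0) :
    nullSet φ ∩ nullSet ψ = {0} := by
  ext w
  simp only [Set.mem_inter_iff, Set.mem_singleton_iff]
  constructor
  · rintro ⟨h1, h2⟩
    by_contra hw
    exact hne (pairing_zero_of_common w hw h1 h2)
  · rintro rfl
    exact ⟨rho_zero_left φ, rho_zero_left ψ⟩

theorem pairing_ne_of_transverse (φ ψ : E) (hφ0 : φ ≠ 0)
    (hφ : nullSet φ = vPerp (nullSet φ)) (hψ0 : ψ ≠ 0)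
    (hψ : nullSet ψ = vPerp (nullSet ψ))
    (hint : nullSet φ ∩ nullSet ψ = {0}) :
    pr nV (reverse (Q := 0) φ * ψ) ≠ 0 := by
  intro hpair
  have hsup := sup_eq_top hφ hψ hint
  obtain ⟨l₁, hl₁⟩ := extract (W := Module.Dual ℝ V) φ hφ0
  obtain ⟨l₂, hl₂⟩ := extract (W := Module.Dual ℝ V) ψ hψ0
  set u₁ : List VV :=
    l₁.map (fun d => (((Module.evalEquiv ℝ V).symm d : V), (0 : Module.Dual ℝ V))) with hu₁
  set u₂ : List VV :=
    l₂.map (fun d => (((Module.evalEquiv ℝ V).symm d : V), (0 : Module.Dual ℝ V))) with hu₂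
  set a : E := app u₁ φ with hadef
  set b : E := app u₂ ψ with hbdef
  have ha : pr 0 a ≠ 0 := by
    rw [hadef, hu₁, app_contrList]
    exact hl₁
  have hb : pr 0 b ≠ 0 := by
    rw [hbdef, hu₂, app_contrList]
    exact hl₂
  obtain ⟨c, hc⟩ := pr_zero_scalar a
  have hc0 : c ≠ 0 := by
    intro h
    rw [h, map_zero] at hc
    exact ha hc
  obtain ⟨c', hc'⟩ := pr_zero_scalar b
  have hc'0 : c' ≠ 0 := by
    intro h
    rw [h, map_zero] at hc'
    exact hb hc'
  set θb := Module.finBasis ℝ (Module.Dual ℝ V) with hθb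
  set Θ : E := ExteriorAlgebra.ιMulti ℝ nV ⇑θb with hΘdef
  have hΘmem : Θ ∈ ⋀[ℝ]^nV (Module.Dual ℝ V) :=
    ExteriorAlgebra.ιMulti_range ℝ nV (Set.mem_range_self _)
  have hΘ0 : Θ ≠ 0 := theta_ne_zero θb
  set t : List VV := (List.ofFn ⇑θb).map (fun α => ((0 : V), α)) with ht
  have hts : app t b = Θ * b := by
    rw [ht, app_wedgeList, hΘdef, ExteriorAlgebra.ιMulti_apply, List.map_ofFn]
    rfl
  have key : pr nV (reverse (Q := 0) a * app t b) = (c' * c) • Θ := by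
    rw [hts, top_mul_right Θ hΘmem b c' hc', mul_smul_comm, map_smul,
      top_rev_mul Θ hΘmem a c hc, smul_smul]
  have key0 : pr nV (reverse (Q := 0) a * app t b) = 0 := by
    rw [hadef, adj_list, ← app_append, ← app_append]
    exact all_vanish hpair hsup _
  rw [key0] at key
  exact smul_ne_zero (mul_ne_zero hc'0 hc0) hΘ0 key.symm

end final

end Stmt16Aux

/-- For pure spinors `φ, ψ ∈ ΛV*` (nonzero spinors with Lagrangian null
spaces), the Chevalley pairing `(φ,ψ) = (φ^⊤ ∧ ψ)_{[n]}` — the top-degree component of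
`reverse φ * ψ`, where `reverse` multiplies degree `k` by `(−1)^{k(k−1)/2}` — is nonzero
if and only if `N_φ` and `N_ψ` are transverse. -/
theorem stmt16 {V : Type*} [AddCommGroup V] [Module ℝ V] [FiniteDimensional ℝ V]
    (φ ψ : ExteriorAlgebra ℝ (Module.Dual ℝ V))
    (hφ0 : φ ≠ 0) (hφ : nullSet φ = vPerp (nullSet φ))
    (hψ0 : ψ ≠ 0) (hψ : nullSet ψ = vPerp (nullSet ψ)) :
    GradedAlgebra.proj (fun i : ℕ => ⋀[ℝ]^i (Module.Dual ℝ V))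
        (Module.finrank ℝ V) (CliffordAlgebra.reverse φ * ψ) ≠ 0 ↔
      nullSet φ ∩ nullSet ψ = {0} := by
  have hd : Module.finrank ℝ (Module.Dual ℝ V) = Module.finrank ℝ V :=
    Subspace.dual_finrank_eq
  rw [← hd]
  constructor
  · exact Stmt16Aux.transverse_of_pairing
  · exact Stmt16Aux.pairing_ne_of_transverse φ ψ hφ0 hφ hψ0 hψ
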